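/- Let A ∈ ℝ^{m×d}, let B ∈ ℝ^{d×m} be a Moore–Penrose pseudoinverse of A, let H ∈ ℝ^{d×d} be orthonormal (HᵀH = I_d), and let X be a random vector in ℝ^d with E[‖X‖²] < ∞ and correlation matrix K₀ = E[XXᵀ]. Then E[‖X − H B A X‖²] = Tr((I_d + BA) K₀) − 2 Tr(H B A K₀). (This is the MSE of the least-squares attack after the privacy-preserving linear transform by H, since the attack then yields X̂ = HBAX.) -/

import Mathlib

open MeasureTheory Matrix

lemma memL2_integrable_mul {Ω : Type*} [MeasureSpace Ω] {f g : Ω → ℝ}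
    (hf : MemLp f 2) (hg : MemLp g 2) :
    Integrable (fun ω => f ω * g ω) := by
  have h := (hf.add hg).integrable_sq
  have hf2 := hf.integrable_sq
  have hg2 := hg.integrable_sq
  have heq : (fun ω => f ω * g ω)
      = fun ω => ((f ω + g ω) ^ 2 - f ω ^ 2 - g ω ^ 2) / 2 := by
    funext ω; ring
  rw [heq]
  exact (((h.sub hf2).sub hg2).div_const 2)

/-- MSE of the least-squares attack after the privacy-preserving orthonormal transform
`H` (the adversary's estimate being `X̂ = HBAX`):
`E‖X − HBAX‖² = Tr((I + BA)K₀) − 2Tr(HBAK₀)`. -/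
theorem mse_ls_after_pps
    {m d : ℕ} (A : Matrix (Fin m) (Fin d) ℝ) (B : Matrix (Fin d) (Fin m) ℝ)
    (h1 : A * B * A = A) (h2 : B * A * B = B)
    (h3 : (A * B)ᵀ = A * B) (h4 : (B * A)ᵀ = B * A)
    (H : Matrix (Fin d) (Fin d) ℝ) (hH : Hᵀ * H = 1)
    {Ω : Type*} [MeasureSpace Ω] [IsProbabilityMeasure (volume : Measure Ω)]
    (X : Ω → Fin d → ℝ) (hXmeas : Measurable X)
    (hL2 : ∀ i, MemLp (fun ω => X ω i) 2)
    (K₀ : Matrix (Fin d) (Fin d) ℝ)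
    (hK₀ : K₀ = Matrix.of fun i j => ∫ ω, X ω i * X ω j) :
    (∫ ω, ∑ i, (X ω i - ((H * (B * A)) *ᵥ X ω) i) ^ 2) =
      Matrix.trace ((1 + B * A) * K₀) - 2 * Matrix.trace (H * (B * A) * K₀) := by
  set C := H * (B * A) with hC
  -- idempotence of BA
  have hidem : (B * A) * (B * A) = B * A := by
    calc (B * A) * (B * A) = B * (A * B * A) := by
          simp [Matrix.mul_assoc]
      _ = B * A := by rw [h1]
  have hCtC : Cᵀ * C = B * A := by
    have : Cᵀ * C = (B * A)ᵀ * (Hᵀ * H) * (B * A) := by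
      simp [hC, Matrix.transpose_mul, Matrix.mul_assoc]
    rw [this, hH, Matrix.mul_one, h4, hidem]
  have hE : ∀ j k, (B * A) j k = ∑ i, C i j * C i k := by
    intro j k
    rw [← hCtC]
    simp [Matrix.mul_apply, Matrix.transpose_apply]
  -- pointwise expansion
  have key : ∀ x : Fin d → ℝ,
      ∑ i, (x i - (C *ᵥ x) i) ^ 2
        = (∑ i, x i * x i + ∑ j, ∑ k, (B * A) j k * (x j * x k))
          - 2 * ∑ i, ∑ j, C i j * (x i * x j) := by
    intro x
    have hmv : ∀ i, (C *ᵥ x) i = ∑ j, C i j * x j := fun i => rfl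
    have hquad : ∑ i, (C *ᵥ x) i * (C *ᵥ x) i = ∑ j, ∑ k, (B * A) j k * (x j * x k) := by
      calc ∑ i, (C *ᵥ x) i * (C *ᵥ x) i
          = ∑ i, ∑ j, ∑ k, (C i j * x j) * (C i k * x k) := by
            refine Finset.sum_congr rfl fun i _ => ?_
            rw [hmv, Finset.sum_mul_sum]
        _ = ∑ j, ∑ k, (∑ i, C i j * C i k) * (x j * x k) := by
            rw [Finset.sum_comm]
            refine Finset.sum_congr rfl fun j _ => ?_
            rw [Finset.sum_comm]
            refine Finset.sum_congr rfl fun k _ => ?_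
            rw [Finset.sum_mul]
            exact Finset.sum_congr rfl fun i _ => by ring
        _ = _ := by
            refine Finset.sum_congr rfl fun j _ => Finset.sum_congr rfl fun k _ => ?_
            rw [hE]
    have hcross : ∑ i, x i * (C *ᵥ x) i = ∑ i, ∑ j, C i j * (x i * x j) := by
      refine Finset.sum_congr rfl fun i _ => ?_
      rw [hmv, Finset.mul_sum]
      exact Finset.sum_congr rfl fun j _ => by ring
    have hsq : ∀ i, (x i - (C *ᵥ x) i) ^ 2
        = x i * x i - 2 * (x i * (C *ᵥ x) i) + (C *ᵥ x) i * (C *ᵥ x) i := by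
      intro i; ring
    rw [Finset.sum_congr rfl fun i _ => hsq i]
    rw [Finset.sum_add_distrib, Finset.sum_sub_distrib, ← Finset.mul_sum, hquad, hcross]
    ring
  -- integrability
  have hint : ∀ i j, Integrable (fun ω => X ω i * X ω j) :=
    fun i j => memL2_integrable_mul (hL2 i) (hL2 j)
  have I1 : Integrable (fun ω => ∑ i, X ω i * X ω i) :=
    integrable_finset_sum _ fun i _ => hint i i
  have I2 : Integrable (fun ω => ∑ j, ∑ k, (B * A) j k * (X ω j * X ω k)) :=
    integrable_finset_sum _ fun j _ => integrable_finset_sum _ fun k _ => (hint j k).const_mul _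
  have I3 : Integrable (fun ω => ∑ i, ∑ j, C i j * (X ω i * X ω j)) :=
    integrable_finset_sum _ fun i _ => integrable_finset_sum _ fun j _ => (hint i j).const_mul _
  have I12 : Integrable (fun ω => ∑ i, X ω i * X ω i
      + ∑ j, ∑ k, (B * A) j k * (X ω j * X ω k)) := I1.add I2
  have I3' : Integrable (fun ω => 2 * ∑ i, ∑ j, C i j * (X ω i * X ω j)) := I3.const_mul 2
  have heqf : (fun ω => ∑ i, (X ω i - (C *ᵥ X ω) i) ^ 2)
      = fun ω => (∑ i, X ω i * X ω i + ∑ j, ∑ k, (B * A) j k * (X ω j * X ω k))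
        - 2 * ∑ i, ∑ j, C i j * (X ω i * X ω j) := by
    funext ω; exact key (X ω)
  rw [show (∫ ω, ∑ i, (X ω i - ((H * (B * A)) *ᵥ X ω) i) ^ 2)
      = ∫ ω, ((∑ i, X ω i * X ω i + ∑ j, ∑ k, (B * A) j k * (X ω j * X ω k))
        - 2 * ∑ i, ∑ j, C i j * (X ω i * X ω j)) from by rw [← hC, heqf]]
  rw [integral_sub I12 I3', integral_add I1 I2,
    integral_const_mul, integral_finset_sum _ (fun i _ => hint i i),
    integral_finset_sum _ (fun j _ => integrable_finset_sum _ fun k _ => (hint j k).const_mul ((B * A) j k)),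
    integral_finset_sum _ (fun i _ => integrable_finset_sum _ fun j _ => (hint i j).const_mul (C i j))]
  simp only [integral_finset_sum _ (fun k (_ : k ∈ Finset.univ) => (hint _ k).const_mul _),
    integral_const_mul]
  -- now identify with traces
  have hsymm : ∀ j k, (∫ ω, X ω j * X ω k) = ∫ ω, X ω k * X ω j := by
    intro j k; congr 1; funext ω; ring
  have htr1 : Matrix.trace ((1 + B * A) * (Matrix.of fun i j => ∫ ω, X ω i * X ω j))
      = (∑ i, ∫ ω, X ω i * X ω i) + ∑ j, ∑ k, (B * A) j k * ∫ ω, X ω j * X ω k := by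
    have hA' : Matrix.trace (Matrix.of fun i j => ∫ ω, X ω i * X ω j)
        = ∑ i, ∫ ω, X ω i * X ω i := by
      simp [Matrix.trace, Matrix.diag]
    have hB' : Matrix.trace ((B * A) * (Matrix.of fun i j => ∫ ω, X ω i * X ω j))
        = ∑ j, ∑ k, (B * A) j k * ∫ ω, X ω j * X ω k := by
      simp only [Matrix.trace, Matrix.diag, Matrix.mul_apply, Matrix.of_apply]
      refine Finset.sum_congr rfl fun i _ => ?_
      refine Finset.sum_congr rfl fun j _ => ?_
      rw [hsymm]
    rw [Matrix.add_mul, Matrix.trace_add, Matrix.one_mul, hA', hB']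
  have htr2 : Matrix.trace (C * (Matrix.of fun i j => ∫ ω, X ω i * X ω j))
      = ∑ i, ∑ j, C i j * ∫ ω, X ω i * X ω j := by
    simp only [Matrix.trace, Matrix.diag, Matrix.mul_apply, Matrix.of_apply]
    refine Finset.sum_congr rfl fun i _ => ?_
    refine Finset.sum_congr rfl fun j _ => ?_
    rw [hsymm]
  rw [hK₀, htr1, htr2]
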